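/- arXiv:2601.17451 — 2 statements merged into one kernel-verified Lean document; each statement's English description precedes it below -/
import Mathlib

section
/- Let S ⊂ ℝ^{n+1} be an immersed submanifold and v a unit section of Tℝ^{n+1} over S, and define Φ_v(p) = (v(p), p − ⟨v(p), p⟩ v(p)). If X ∈ T_pS lies in the kernel of dΦ_v at p, then X ∈ span{v(p)}. In particular, if v(p) ∉ T_pS then dΦ_v|_p is injective. -/
open RealInnerProductSpace

/-- Let `S ⊂ ℝ^{n+1}` be an immersed submanifold with tangent space `T` at `p`, and `v` a
unit section of `Tℝ^{n+1}` over `S` (extended to the ambient space).  Define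
`Φ_v(x) = (v(x), x − ⟨v(x), x⟩ v(x))`.  If `X ∈ T_pS` lies in the kernel of `dΦ_v` at `p`,
then `X ∈ span{v(p)}`.  In particular, if `v(p) ∉ T_pS` then `dΦ_v|_p` is injective. -/
theorem kernel_dPhi_subset_span (n : ℕ)
    (v : EuclideanSpace ℝ (Fin (n + 1)) → EuclideanSpace ℝ (Fin (n + 1)))
    (p : EuclideanSpace ℝ (Fin (n + 1)))
    (T : Submodule ℝ (EuclideanSpace ℝ (Fin (n + 1))))  -- tangent space of S at p
    (hv : DifferentiableAt ℝ v p)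
    (hvunit : ∀ x, ‖v x‖ = 1) :
    (∀ X ∈ T,
      fderiv ℝ (fun x => (v x, x - ⟪v x, x⟫ • v x)) p X = 0 → X ∈ (ℝ ∙ v p)) ∧
    (v p ∉ T →
      ∀ X ∈ T, fderiv ℝ (fun x => (v x, x - ⟪v x, x⟫ • v x)) p X = 0 → X = 0) := by
  have hg : DifferentiableAt ℝ (fun x => ⟪v x, x⟫) p :=
    hv.inner ℝ differentiableAt_id
  have hsm : DifferentiableAt ℝ (fun x => ⟪v x, x⟫ • v x) p := hg.smul hv
  have hw : DifferentiableAt ℝ (fun x : EuclideanSpace ℝ (Fin (n + 1)) =>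
      x - ⟪v x, x⟫ • v x) p := differentiableAt_id.sub hsm
  have key : ∀ X ∈ T,
      fderiv ℝ (fun x => (v x, x - ⟪v x, x⟫ • v x)) p X = 0 → X ∈ (ℝ ∙ v p) := by
    intro X _hX h
    rw [DifferentiableAt.fderiv_prodMk hv hw, ContinuousLinearMap.prod_apply,
      Prod.ext_iff] at h
    obtain ⟨h1, h2⟩ := h
    simp only [Prod.fst_zero, Prod.snd_zero] at h1 h2
    rw [fderiv_fun_sub differentiableAt_fun_id hsm] at h2
    simp only [ContinuousLinearMap.sub_apply, fderiv_fun_id, ContinuousLinearMap.id_apply] at h2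
    have hsmX : fderiv ℝ (fun x => ⟪v x, x⟫ • v x) p X
        = ⟪v p, p⟫ • fderiv ℝ v p X
          + (fderiv ℝ (fun x => ⟪v x, x⟫) p X) • v p := by
      rw [fderiv_fun_smul hg hv]
      simp
    have hin : fderiv ℝ (fun x => ⟪v x, x⟫) p X
        = ⟪v p, X⟫ + ⟪fderiv ℝ v p X, p⟫ := by
      rw [fderiv_inner_apply ℝ hv differentiableAt_fun_id]
      simp [fderiv_fun_id]
    rw [hsmX, hin, h1] at h2
    simp only [smul_zero, zero_add, inner_zero_left, add_zero] at h2
    exact Submodule.mem_span_singleton.mpr ⟨⟪v p, X⟫, (sub_eq_zero.mp h2).symm⟩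
  refine ⟨key, ?_⟩
  intro hvT X hX h
  obtain ⟨c, hc⟩ := Submodule.mem_span_singleton.mp (key X hX h)
  by_cases hc0 : c = 0
  · rw [← hc, hc0, zero_smul]
  · exfalso
    apply hvT
    have : v p = c⁻¹ • X := by rw [← hc, smul_smul, inv_mul_cancel₀ hc0, one_smul]
    rw [this]
    exact T.smul_mem _ hX
end

section
/- Let S ⊂ ℝ^{n+1} be an immersed submanifold, v a unit tangent vector field on S, and Φ_v(p) = (v(p), p − ⟨v(p),p⟩v(p)). Then Φ_v is an immersion if and only if ∇̄_v v(p) ≠ 0 for every p ∈ S (v is nowhere geodesic with respect to the flat connection of ℝ^{n+1}). -/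
open RealInnerProductSpace

lemma Phi_fderiv_apply (n : ℕ)
    (v : EuclideanSpace ℝ (Fin (n + 1)) → EuclideanSpace ℝ (Fin (n + 1)))
    (hv : Differentiable ℝ v) (p X : EuclideanSpace ℝ (Fin (n + 1))) :
    fderiv ℝ (fun x => (v x, x - ⟪v x, x⟫ • v x)) p X =
      (fderiv ℝ v p X,
        X - (⟪v p, X⟫ + ⟪fderiv ℝ v p X, p⟫) • v p - ⟪v p, p⟫ • fderiv ℝ v p X) := by
  have hg : DifferentiableAt ℝ (fun x => ⟪v x, x⟫) p :=
    (hv p).inner ℝ differentiableAt_fun_id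
  have hgs : DifferentiableAt ℝ (fun x => ⟪v x, x⟫ • v x) p := hg.smul (hv p)
  rw [(hv p).fderiv_prodMk (f₂ := fun x => x - ⟪v x, x⟫ • v x) (differentiableAt_fun_id.sub hgs)]
  simp only [ContinuousLinearMap.prod_apply, fderiv_fun_sub differentiableAt_fun_id hgs,
    ContinuousLinearMap.sub_apply, fderiv_id', ContinuousLinearMap.id_apply,
    fderiv_fun_smul hg (hv p), ContinuousLinearMap.add_apply, ContinuousLinearMap.smul_apply,
    ContinuousLinearMap.smulRight_apply,
    fderiv_inner_apply ℝ (hv p) differentiableAt_fun_id, fderiv_id', ContinuousLinearMap.id_apply]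
  rw [Prod.mk.injEq]
  exact ⟨rfl, by abel⟩

/-- Let `S ⊂ ℝ^{n+1}` be an immersed submanifold with tangent spaces `T p` for `p ∈ S`,
and `v` a unit tangent vector field on `S` (extended to the ambient space).  With
`Φ_v(x) = (v(x), x − ⟨v(x), x⟩ v(x))`, the map `Φ_v` is an immersion (its differential is
injective on each tangent space) if and only if `∇̄_v v(p) ≠ 0` for every `p ∈ S`, i.e. `v`
is nowhere geodesic with respect to the flat connection `∇̄` of `ℝ^{n+1}`. -/
theorem Phi_immersion_iff_nowhere_geodesic (n : ℕ)
    (S : Set (EuclideanSpace ℝ (Fin (n + 1))))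
    (v : EuclideanSpace ℝ (Fin (n + 1)) → EuclideanSpace ℝ (Fin (n + 1)))
    (T : EuclideanSpace ℝ (Fin (n + 1)) → Submodule ℝ (EuclideanSpace ℝ (Fin (n + 1))))
    (hv : Differentiable ℝ v)
    (hvunit : ∀ x, ‖v x‖ = 1)
    (hvtan : ∀ p ∈ S, v p ∈ T p) :  -- v is tangent to S
    (∀ p ∈ S, ∀ X ∈ T p,
        fderiv ℝ (fun x => (v x, x - ⟪v x, x⟫ • v x)) p X = 0 → X = 0) ↔
      (∀ p ∈ S, fderiv ℝ v p (v p) ≠ 0) := by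
  constructor
  · intro h p hp hzero
    have hvp : v p ≠ 0 := by
      intro h0
      have := hvunit p
      rw [h0, norm_zero] at this
      norm_num at this
    apply hvp
    apply h p hp (v p) (hvtan p hp)
    rw [Phi_fderiv_apply n v hv p (v p), hzero]
    have h1 : ⟪v p, v p⟫ = (1 : ℝ) := by
      rw [real_inner_self_eq_norm_sq, hvunit p]; norm_num
    simp [h1, hvunit p]
  · intro h p hp X _hX hker
    rw [Phi_fderiv_apply n v hv p X, Prod.mk_eq_zero] at hker
    obtain ⟨h1, h2⟩ := hker
    simp only [h1, inner_zero_left, add_zero, smul_zero, sub_zero] at h2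
    have hX : X = ⟪v p, X⟫ • v p := sub_eq_zero.mp h2
    have h3 : ⟪v p, X⟫ • fderiv ℝ v p (v p) = 0 := by
      rw [← map_smul, ← hX, h1]
    rcases smul_eq_zero.mp h3 with hc | hc
    · rw [hX, hc, zero_smul]
    · exact absurd hc (h p hp)
end
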